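/- For every natural number n, the number of partitions of n in which each part k appears at most k − 1 times (in particular the part 1 does not appear) equals the number of partitions of n in which no part is a perfect square. -/

import Mathlib

namespace Andrews

/-- digits of `g` in the mixed radix system with radices `r, r^2, r^4, ...` -/
def dig : ℕ → ℕ → ℕ → ℕ
  | r, g, 0 => g % r
  | r, g, i+1 => dig (r^2) (g / r) i


lemma exp_key (r i : ℕ) : (r^2) ^ (2 ^ i - 1) * r = r ^ (2 ^ (i+1) - 1) := by
  rw [← pow_mul, ← pow_succ]
  congr 1
  have h1 : 1 ≤ 2 ^ i := Nat.one_le_two_pow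
  have h2 : 2 ^ (i+1) = 2 * 2 ^ i := by rw [pow_succ]; ring
  omega

lemma exp_key2 (r i : ℕ) : (r^2) ^ (2 ^ i) = r ^ (2 ^ (i+1)) := by
  rw [← pow_mul]
  congr 1
  rw [pow_succ]; ring

lemma dig_zero : ∀ (i r : ℕ), dig r 0 i = 0 := by
  intro i
  induction i with
  | zero => intro r; simp [dig]
  | succ i ih => intro r; simp [dig, ih]

lemma dig_le_div : ∀ (i r g : ℕ), dig r g i ≤ g / r ^ (2 ^ i - 1) := by
  intro i
  induction i with
  | zero => intro r g; simpa [dig] using Nat.mod_le g r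
  | succ i ih =>
    intro r g
    calc dig r g (i+1) = dig (r^2) (g / r) i := rfl
      _ ≤ (g / r) / (r^2) ^ (2 ^ i - 1) := ih _ _
      _ = g / r ^ (2 ^ (i+1) - 1) := by
          rw [Nat.div_div_eq_div_mul, mul_comm, exp_key]

lemma dig_lt : ∀ (i r g : ℕ), 2 ≤ r → dig r g i < r ^ (2 ^ i) := by
  intro i
  induction i with
  | zero => intro r g hr; simpa [dig] using Nat.mod_lt g (by omega)
  | succ i ih =>
    intro r g hr
    have := ih (r^2) (g / r) (by nlinarith)
    calc dig r g (i+1) = dig (r^2) (g / r) i := rfl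
      _ < (r^2) ^ (2 ^ i) := this
      _ = r ^ (2 ^ (i+1)) := exp_key2 r i

lemma dig_sum : ∀ (N r g : ℕ), 2 ≤ r → g < r ^ (2 ^ N - 1) →
    ∑ i ∈ Finset.range N, dig r g i * r ^ (2 ^ i - 1) = g := by
  intro N
  induction N with
  | zero => intro r g hr hg; simp at hg ⊢; omega
  | succ N ih =>
    intro r g hr hg
    rw [Finset.sum_range_succ']
    have key : ∀ i, dig r g (i+1) * r ^ (2 ^ (i+1) - 1)
        = (dig (r^2) (g/r) i * (r^2) ^ (2 ^ i - 1)) * r := by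
      intro i
      show dig (r^2) (g/r) i * r ^ (2 ^ (i+1) - 1) = _
      rw [mul_assoc, exp_key]
    simp only [key]
    rw [← Finset.sum_mul, ih (r^2) (g/r) (by nlinarith) ?_]
    · simp [dig]
      rw [mul_comm]
      exact Nat.div_add_mod g r
    · rw [Nat.div_lt_iff_lt_mul (by omega)]
      calc g < r ^ (2 ^ (N+1) - 1) := hg
        _ = (r^2) ^ (2 ^ N - 1) * r := (exp_key r N).symm

lemma dig_eq : ∀ (N r : ℕ) (F : ℕ → ℕ), 2 ≤ r → (∀ i, F i < r ^ (2 ^ i)) →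
    (∀ i, N ≤ i → F i = 0) → ∀ i,
    dig r (∑ j ∈ Finset.range N, F j * r ^ (2 ^ j - 1)) i = F i := by
  intro N
  induction N with
  | zero =>
    intro r F hr hFlt hF0 i
    simp only [Finset.range_zero, Finset.sum_empty]
    rw [dig_zero]
    exact (hF0 i (Nat.zero_le i)).symm
  | succ N ih =>
    intro r F hr hFlt hF0 i
    have key : ∀ j, F (j+1) * r ^ (2 ^ (j+1) - 1)
        = (F (j+1) * (r^2) ^ (2 ^ j - 1)) * r := by
      intro j
      rw [mul_assoc, exp_key]
    have hsplit : ∑ j ∈ Finset.range (N+1), F j * r ^ (2 ^ j - 1)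
        = F 0 + (∑ j ∈ Finset.range N, F (j+1) * (r^2) ^ (2 ^ j - 1)) * r := by
      rw [Finset.sum_range_succ']
      simp only [key]
      rw [← Finset.sum_mul]
      simp [add_comm]
    have hF0lt : F 0 < r := by simpa using hFlt 0
    match i with
    | 0 =>
      show (_) % r = F 0
      rw [hsplit, Nat.add_mul_mod_self_right, Nat.mod_eq_of_lt hF0lt]
    | (i+1) =>
      show dig (r^2) (_ / r) i = F (i+1)
      rw [hsplit, Nat.add_mul_div_right _ _ (by omega : 0 < r),
        Nat.div_eq_of_lt hF0lt, zero_add]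
      exact ih (r^2) (fun j => F (j+1)) (by nlinarith)
        (fun j => by
          have := hFlt (j+1)
          rwa [← exp_key2] at this)
        (fun j hj => hF0 (j+1) (by omega)) i


/-- `decomp j = (k, i)` with `j = k ^ 2 ^ i` and `k` not a perfect square. -/
def decomp (j : ℕ) : ℕ × ℕ :=
  if h : 2 ≤ j ∧ Nat.sqrt j ^ 2 = j then
    ((decomp (Nat.sqrt j)).1, (decomp (Nat.sqrt j)).2 + 1)
  else (j, 0)
decreasing_by
  exact Nat.sqrt_lt_self (by omega)

lemma decomp_of_not {j : ℕ} (h : ¬ (2 ≤ j ∧ Nat.sqrt j ^ 2 = j)) : decomp j = (j, 0) := by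
  rw [decomp, dif_neg h]

lemma sqrt_pow_sq (m : ℕ) : Nat.sqrt (m ^ 2) = m := by
  exact Nat.sqrt_eq' m

lemma decomp_pow (k : ℕ) (hk : 2 ≤ k) (hs : Nat.sqrt k ^ 2 ≠ k) :
    ∀ i, decomp (k ^ 2 ^ i) = (k, i) := by
  intro i
  induction i with
  | zero =>
    rw [pow_zero, pow_one]
    exact decomp_of_not (by tauto)
  | succ i ih =>
    have hpow : k ^ 2 ^ (i+1) = (k ^ 2 ^ i) ^ 2 := by
      rw [← pow_mul, pow_succ]
    have hsqrt : Nat.sqrt (k ^ 2 ^ (i+1)) = k ^ 2 ^ i := by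
      rw [hpow, sqrt_pow_sq]
    have h2 : 2 ≤ k ^ 2 ^ (i+1) := le_trans hk (Nat.le_self_pow (by positivity) k)
    rw [decomp, dif_pos ⟨h2, by rw [hsqrt, ← hpow]⟩, hsqrt, ih]

lemma decomp_spec : ∀ j, 2 ≤ j →
    2 ≤ (decomp j).1 ∧ Nat.sqrt (decomp j).1 ^ 2 ≠ (decomp j).1 ∧
      (decomp j).1 ^ 2 ^ (decomp j).2 = j := by
  intro j
  induction j using Nat.strong_induction_on with
  | _ j ih =>
    intro hj
    by_cases h : 2 ≤ j ∧ Nat.sqrt j ^ 2 = j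
    · have hslt : Nat.sqrt j < j := Nat.sqrt_lt_self (by omega)
      have hs2 : 2 ≤ Nat.sqrt j := by
        rcases h with ⟨-, h2⟩
        rcases Nat.lt_or_ge (Nat.sqrt j) 2 with hlt | hge
        · interval_cases h' : Nat.sqrt j <;> omega
        · exact hge
      obtain ⟨h1, h2, h3⟩ := ih (Nat.sqrt j) hslt hs2
      rw [decomp, dif_pos h]
      refine ⟨h1, h2, ?_⟩
      simp only
      rw [pow_succ, pow_mul, h3, h.2]
    · rw [decomp_of_not h]
      exact ⟨hj, fun hc => h ⟨hj, hc⟩, by rw [pow_zero, pow_one]⟩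


/-- condition on the base -/
def Cond (k : ℕ) : Prop := 2 ≤ k ∧ Nat.sqrt k ^ 2 ≠ k

instance : DecidablePred Cond := fun _ => instDecidableAnd

/-- from "each part k at most k-1 times" to "no square parts" -/
noncomputable def phi (n : ℕ) (f : ℕ →₀ ℕ) : ℕ →₀ ℕ :=
  Finsupp.onFinset (f.support.image fun j => (decomp j).1)
    (fun k => if Cond k then
        ∑ i ∈ Finset.range (n+1), f (k ^ 2 ^ i) * k ^ (2 ^ i - 1) else 0)
    (by
      intro k hk
      split_ifs at hk with hc
      · obtain ⟨i, -, hi⟩ := Finset.exists_ne_zero_of_sum_ne_zero hk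
        have hf : f (k ^ 2 ^ i) ≠ 0 := fun h => hi (by rw [h, zero_mul])
        refine Finset.mem_image.2 ⟨k ^ 2 ^ i, Finsupp.mem_support_iff.2 hf, ?_⟩
        rw [decomp_pow k hc.1 hc.2]
      · exact absurd rfl hk)

lemma phi_apply_of_cond (n : ℕ) (f : ℕ →₀ ℕ) {k : ℕ} (hk : Cond k) :
    phi n f k = ∑ i ∈ Finset.range (n+1), f (k ^ 2 ^ i) * k ^ (2 ^ i - 1) := by
  simp only [phi, Finsupp.onFinset_apply, if_pos hk]

lemma phi_apply_of_not_cond (n : ℕ) (f : ℕ →₀ ℕ) {k : ℕ} (hk : ¬ Cond k) :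
    phi n f k = 0 := by
  simp only [phi, Finsupp.onFinset_apply, if_neg hk]

/-- from "no square parts" to "each part k at most k-1 times" -/
noncomputable def psi (g : ℕ →₀ ℕ) : ℕ →₀ ℕ :=
  Finsupp.onFinset (g.support.biUnion fun k => Finset.range (k * g k + 1))
    (fun j => dig (decomp j).1 (g (decomp j).1) (decomp j).2)
    (by
      intro j hj
      rcases Nat.lt_or_ge j 2 with hj2 | hj2
      · interval_cases j
        · have h0 : decomp 0 = (0, 0) := decomp_of_not (by omega)
          rw [h0] at hj
          simp only [dig, Nat.mod_zero] at hj
          refine Finset.mem_biUnion.2 ⟨0, Finsupp.mem_support_iff.2 hj, ?_⟩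
          exact Finset.mem_range.2 (by omega)
        · have h1 : decomp 1 = (1, 0) := decomp_of_not (by norm_num)
          rw [h1] at hj
          simp [dig, Nat.mod_one] at hj
      · obtain ⟨hb2, -, hbe⟩ := decomp_spec j hj2
        set k := (decomp j).1 with hk
        set i := (decomp j).2 with hi
        have hgk : g k ≠ 0 := by
          intro h
          rw [h, dig_zero] at hj
          exact hj rfl
        have hle : dig k (g k) i ≤ g k / k ^ (2 ^ i - 1) := dig_le_div i k (g k)
        have hdvd : k ^ (2 ^ i - 1) ≤ g k := by
          by_contra hcon
          push_neg at hcon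
          rw [Nat.div_eq_of_lt hcon] at hle
          omega
        have hjle : j ≤ k * g k := by
          calc j = k ^ 2 ^ i := hbe.symm
            _ = k * k ^ (2 ^ i - 1) := by
                rw [← pow_succ']
                congr 1
                have : 1 ≤ 2 ^ i := Nat.one_le_two_pow
                omega
            _ ≤ k * g k := Nat.mul_le_mul_left k hdvd
        exact Finset.mem_biUnion.2 ⟨k, Finsupp.mem_support_iff.2 hgk,
          Finset.mem_range.2 (by omega)⟩)

lemma psi_apply (g : ℕ →₀ ℕ) (j : ℕ) :
    psi g j = dig (decomp j).1 (g (decomp j).1) (decomp j).2 := rfl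

lemma lt_pow_pow {k : ℕ} (hk : 2 ≤ k) (i m : ℕ) (hm : m ≤ i) : m < k ^ 2 ^ i := by
  calc m < 2 ^ m := Nat.lt_two_pow_self (n := m)
    _ ≤ 2 ^ i := Nat.pow_le_pow_right (by omega) hm
    _ < 2 ^ 2 ^ i := Nat.lt_two_pow_self
    _ ≤ k ^ 2 ^ i := Nat.pow_le_pow_left hk _

lemma psi_phi (n : ℕ) (f : ℕ →₀ ℕ) (hlt : ∀ j, f j ≤ j - 1)
    (hbnd : ∀ j, f j ≠ 0 → j ≤ n) : psi (phi n f) = f := by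
  ext j
  rcases Nat.lt_or_ge j 2 with hj2 | hj2
  · interval_cases j
    · have h0 : decomp 0 = (0, 0) := decomp_of_not (by omega)
      rw [psi_apply, h0]
      simp only [dig, Nat.mod_zero]
      rw [phi_apply_of_not_cond n f (by simp [Cond])]
      have := hlt 0
      omega
    · have h1 : decomp 1 = (1, 0) := decomp_of_not (by norm_num)
      rw [psi_apply, h1]
      simp only [dig, Nat.mod_one]
      have := hlt 1
      omega
  · obtain ⟨hb2, hbs, hbe⟩ := decomp_spec j hj2
    set k := (decomp j).1 with hk
    set i := (decomp j).2 with hi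
    have hcond : Cond k := ⟨hb2, hbs⟩
    rw [psi_apply, ← hk, ← hi, phi_apply_of_cond n f hcond]
    have key := dig_eq (n+1) k (fun i' => f (k ^ 2 ^ i')) hb2
      (fun i' => by
        have h1 : 1 ≤ k ^ 2 ^ i' := Nat.one_le_pow _ _ (by omega)
        have := hlt (k ^ 2 ^ i')
        omega)
      (fun i' hi' => by
        by_contra hcon
        have := hbnd _ hcon
        have := lt_pow_pow hb2 i' n (by omega)
        omega)
      i
    rw [key, hbe]

lemma phi_psi (n : ℕ) (g : ℕ →₀ ℕ) (hsq : ∀ k, Nat.sqrt k ^ 2 = k → g k = 0)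
    (hbnd : ∀ k, g k ≠ 0 → k * g k ≤ n) : phi n (psi g) = g := by
  ext k
  by_cases hc : Cond k
  · rw [phi_apply_of_cond n _ hc]
    have happ : ∀ i, psi g (k ^ 2 ^ i) = dig k (g k) i := by
      intro i
      rw [psi_apply, decomp_pow k hc.1 hc.2]
    simp only [happ]
    apply dig_sum (n+1) k (g k) hc.1
    have hgn : g k ≤ n := by
      by_cases h : g k = 0
      · omega
      · have := hbnd k h
        nlinarith [hc.1]
    calc g k ≤ n := hgn
      _ < k ^ (2 ^ (n+1) - 1) := by
          calc n < 2 ^ (n+1) - 1 := by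
                have := Nat.lt_two_pow_self (n := n+1)
                have h2 : (2:ℕ) ^ (n+1) = 2 * 2 ^ n := by rw [pow_succ]; ring
                have := Nat.one_le_two_pow (n := n)
                omega
            _ < 2 ^ (2 ^ (n+1) - 1) := Nat.lt_two_pow_self
            _ ≤ k ^ (2 ^ (n+1) - 1) := Nat.pow_le_pow_left hc.1 _
  · rw [phi_apply_of_not_cond n _ hc]
    rw [Cond] at hc
    push_neg at hc
    rcases Nat.lt_or_ge k 2 with hk2 | hk2
    · interval_cases k
      · exact (hsq 0 (by norm_num)).symm
      · exact (hsq 1 (by norm_num)).symm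
    · exact (hsq k (hc hk2)).symm


/-- weight of a multiplicity function -/
def W (f : ℕ →₀ ℕ) : ℕ := f.sum fun j m => j * m

lemma pow_pred_mul (k i : ℕ) : k ^ (2 ^ i - 1) * k = k ^ 2 ^ i := by
  rw [← pow_succ]
  congr 1
  have := Nat.one_le_two_pow (n := i)
  omega

lemma W_phi (n : ℕ) (f : ℕ →₀ ℕ) (hlt : ∀ j, f j ≤ j - 1)
    (hbnd : ∀ j, f j ≠ 0 → j ≤ n) : W (phi n f) = W f := by
  classical
  set T := f.support.image (fun j => (decomp j).1) with hT
  have hsub : (phi n f).support ⊆ T := Finsupp.support_onFinset_subset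
  have hj2_of_mem : ∀ j ∈ f.support, 2 ≤ j := by
    intro j hj
    have hne := Finsupp.mem_support_iff.1 hj
    have := hlt j
    rcases Nat.lt_or_ge j 2 with h | h
    · interval_cases j <;> omega
    · exact h
  have hcond : ∀ k ∈ T, Cond k := by
    intro k hk
    obtain ⟨j, hjs, hjk⟩ := Finset.mem_image.1 hk
    obtain ⟨h1, h2, h3⟩ := decomp_spec j (hj2_of_mem j hjs)
    rw [← hjk]
    exact ⟨h1, h2⟩
  rw [W, Finsupp.sum_of_support_subset _ hsub _ (fun k _ => mul_zero k)]
  calc ∑ k ∈ T, k * phi n f k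
      = ∑ k ∈ T, ∑ i ∈ Finset.range (n+1), f (k ^ 2 ^ i) * k ^ 2 ^ i := by
        refine Finset.sum_congr rfl fun k hk => ?_
        rw [phi_apply_of_cond n f (hcond k hk), Finset.mul_sum]
        refine Finset.sum_congr rfl fun i _ => ?_
        rw [← pow_pred_mul k i]
        ring
    _ = ∑ p ∈ T ×ˢ Finset.range (n+1), f (p.1 ^ 2 ^ p.2) * p.1 ^ 2 ^ p.2 := by
        rw [Finset.sum_product]
    _ = ∑ j ∈ f.support, j * f j := by
        refine Finset.sum_bij_ne_zero (fun p _ _ => p.1 ^ 2 ^ p.2) ?_ ?_ ?_ ?_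
        · intro p hp hne
          refine Finsupp.mem_support_iff.2 fun h => hne ?_
          rw [h, zero_mul]
        · intro p hp₁ hp₂ q hq₁ hq₂ heq
          have hcp := hcond p.1 (Finset.mem_product.1 hp₁).1
          have hcq := hcond q.1 (Finset.mem_product.1 hq₁).1
          have e1 := decomp_pow p.1 hcp.1 hcp.2 p.2
          rw [heq, decomp_pow q.1 hcq.1 hcq.2 q.2] at e1
          exact Prod.ext (congrArg Prod.fst e1).symm (congrArg Prod.snd e1).symm
        · intro j hj hne
          have hj2 := hj2_of_mem j hj
          obtain ⟨h1, h2, h3⟩ := decomp_spec j hj2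
          have hfj : f j ≠ 0 := Finsupp.mem_support_iff.1 hj
          have hjn : j ≤ n := hbnd j hfj
          have hilt : (decomp j).2 < j := by
            have := lt_pow_pow h1 (decomp j).2 (decomp j).2 le_rfl
            omega
          refine ⟨((decomp j).1, (decomp j).2), ?_, ?_, h3⟩
          · refine Finset.mem_product.2 ⟨Finset.mem_image.2 ⟨j, hj, rfl⟩,
              Finset.mem_range.2 (by omega)⟩
          · rw [h3]
            rw [mul_comm] at hne
            exact hne
        · intro p hp₁ hp₂
          exact mul_comm _ _
    _ = W f := rfl

lemma W_toFinsupp (s : Multiset ℕ) : W s.toFinsupp = s.sum := by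
  induction s using Multiset.induction with
  | empty => simp [W]
  | cons a s ih =>
    have : (a ::ₘ s) = ({a} : Multiset ℕ) + s := by
      rw [Multiset.singleton_add]
    rw [this, Multiset.toFinsupp_add, Multiset.toFinsupp_singleton, W,
      Finsupp.sum_add_index' (fun j => mul_zero j) (fun j m₁ m₂ => mul_add j m₁ m₂),
      Finsupp.sum_single_index (mul_zero a), Multiset.sum_add, Multiset.sum_singleton]
    show a * 1 + W s.toFinsupp = a + s.sum
    rw [ih, mul_one]

lemma sum_toMultiset (f : ℕ →₀ ℕ) : (Finsupp.toMultiset f).sum = W f := by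
  classical
  rw [← W_toFinsupp (Finsupp.toMultiset f), Finsupp.toMultiset_toFinsupp]


lemma mem_le_sum {s : Multiset ℕ} {a : ℕ} (h : a ∈ s) : a ≤ s.sum := by
  obtain ⟨t, rfl⟩ := Multiset.exists_cons_of_mem h
  rw [Multiset.sum_cons]
  omega

lemma sum_le_of_le {s t : Multiset ℕ} (h : s ≤ t) : s.sum ≤ t.sum := by
  obtain ⟨u, rfl⟩ := Multiset.le_iff_exists_add.1 h
  rw [Multiset.sum_add]
  omega

lemma count_mul_le_sum (s : Multiset ℕ) (k : ℕ) : k * s.count k ≤ s.sum := by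
  have h := sum_le_of_le (Multiset.le_count_iff_replicate_le.1 (le_refl (s.count k)))
  rwa [Multiset.sum_replicate, smul_eq_mul, mul_comm] at h

lemma psi_le (g : ℕ →₀ ℕ) (h0 : g 0 = 0) (k : ℕ) : psi g k ≤ k - 1 := by
  rcases Nat.lt_or_ge k 2 with hk | hk
  · interval_cases k
    · rw [psi_apply, decomp_of_not (by omega)]
      simp [dig, h0]
    · rw [psi_apply, decomp_of_not (by norm_num)]
      simp [dig, Nat.mod_one]
  · obtain ⟨hb2, -, hbe⟩ := decomp_spec k hk
    have := dig_lt (decomp k).2 (decomp k).1 (g (decomp k).1) hb2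
    rw [psi_apply]
    omega

lemma psi_bound (g : ℕ →₀ ℕ) (n : ℕ) (hbnd2 : ∀ k, g k ≠ 0 → k * g k ≤ n)
    (j : ℕ) (h : psi g j ≠ 0) : j ≤ n := by
  rcases Nat.lt_or_ge j 2 with hj | hj
  · interval_cases j
    · omega
    · rw [psi_apply, decomp_of_not (by norm_num)] at h
      simp [dig, Nat.mod_one] at h
  · obtain ⟨hb2, -, hbe⟩ := decomp_spec j hj
    set k := (decomp j).1 with hk
    set i := (decomp j).2 with hi
    rw [psi_apply, ← hk, ← hi] at h
    have hgk : g k ≠ 0 := by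
      intro hg
      rw [hg, dig_zero] at h
      exact h rfl
    have hle : dig k (g k) i ≤ g k / k ^ (2 ^ i - 1) := dig_le_div i k (g k)
    have hdvd : k ^ (2 ^ i - 1) ≤ g k := by
      by_contra hcon
      push_neg at hcon
      rw [Nat.div_eq_of_lt hcon] at hle
      omega
    have hjle : j ≤ k * g k := by
      calc j = k ^ 2 ^ i := hbe.symm
        _ = k * k ^ (2 ^ i - 1) := by
            rw [mul_comm, pow_pred_mul]
        _ ≤ k * g k := Nat.mul_le_mul_left k hdvd
    exact le_trans hjle (hbnd2 k hgk)

lemma count_toM (f : ℕ →₀ ℕ) (a : ℕ) : (Finsupp.toMultiset f).count a = f a :=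
  Finsupp.count_toMultiset f a

/-- The explicit bijection. -/
noncomputable def equivAB (n : ℕ) :
    {p : n.Partition // ∀ k, p.parts.count k ≤ k - 1} ≃
      {p : n.Partition // ∀ i ∈ p.parts, ¬ ∃ m : ℕ, 0 < m ∧ i = m ^ 2} where
  toFun a :=
    let f := a.1.parts.toFinsupp
    have hf : ∀ j, f j = a.1.parts.count j := fun j => rfl
    have hlt : ∀ j, f j ≤ j - 1 := fun j => a.2 j
    have hbnd : ∀ j, f j ≠ 0 → j ≤ n := fun j h => by
      have hmem : j ∈ a.1.parts := by
        rw [← Multiset.count_ne_zero]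
        exact h
      exact le_trans (mem_le_sum hmem) (le_of_eq a.1.parts_sum)
    have hcond : ∀ i, (phi n f) i ≠ 0 → Cond i := fun i h => by
      by_contra hc
      exact h (phi_apply_of_not_cond n f hc)
    ⟨⟨(phi n f).toMultiset,
      fun {i} hi => by
        have h := Multiset.count_ne_zero.2 hi
        rw [count_toM] at h
        have := (hcond i h).1
        omega,
      by
        rw [sum_toMultiset, W_phi n f hlt hbnd, ← sum_toMultiset,
          Multiset.toFinsupp_toMultiset]
        exact a.1.parts_sum⟩,
      by
        intro i hi
        have h := Multiset.count_ne_zero.2 hi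
        rw [count_toM] at h
        rintro ⟨m, hm, rfl⟩
        exact (hcond _ h).2 (by rw [sqrt_pow_sq])⟩
  invFun b :=
    let g := b.1.parts.toFinsupp
    have hg : ∀ j, g j = b.1.parts.count j := fun j => rfl
    have h0 : g 0 = 0 := by
      rw [hg, Multiset.count_eq_zero]
      intro hmem
      exact absurd (b.1.parts_pos hmem) (by omega)
    have hsq : ∀ k, Nat.sqrt k ^ 2 = k → g k = 0 := fun k hk => by
      by_contra h
      have hmem : k ∈ b.1.parts := by
        rw [← Multiset.count_ne_zero]
        exact h
      have hkpos : 0 < k := b.1.parts_pos hmem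
      have hspos : 0 < Nat.sqrt k := by
        rcases Nat.eq_zero_or_pos (Nat.sqrt k) with h' | h'
        · rw [h'] at hk
          simp at hk
          omega
        · exact h'
      exact b.2 k hmem ⟨Nat.sqrt k, hspos, hk.symm⟩
    have hbnd2 : ∀ k, g k ≠ 0 → k * g k ≤ n := fun k _ => by
      rw [hg]
      exact le_trans (count_mul_le_sum b.1.parts k) (le_of_eq b.1.parts_sum)
    ⟨⟨(psi g).toMultiset,
      fun {j} hj => by
        have h := Multiset.count_ne_zero.2 hj
        rw [count_toM] at h
        rcases Nat.eq_zero_or_pos j with rfl | h'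
        · exfalso
          apply h
          rw [psi_apply, decomp_of_not (by omega)]
          simp [dig, h0]
        · exact h',
      by
        rw [sum_toMultiset,
          ← W_phi n (psi g) (psi_le g h0) (psi_bound g n hbnd2),
          phi_psi n g hsq hbnd2, ← sum_toMultiset, Multiset.toFinsupp_toMultiset]
        exact b.1.parts_sum⟩,
      fun k => by
        rw [count_toM]
        exact psi_le g h0 k⟩
  left_inv a := by
    apply Subtype.ext
    apply Nat.Partition.ext
    show Finsupp.toMultiset (psi ((Finsupp.toMultiset (phi n a.1.parts.toFinsupp)).toFinsupp)) = _
    rw [Finsupp.toMultiset_toFinsupp]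
    have hlt : ∀ j, a.1.parts.toFinsupp j ≤ j - 1 := fun j => a.2 j
    have hbnd : ∀ j, a.1.parts.toFinsupp j ≠ 0 → j ≤ n := fun j h => by
      have hmem : j ∈ a.1.parts := by
        rw [← Multiset.count_ne_zero]
        exact h
      exact le_trans (mem_le_sum hmem) (le_of_eq a.1.parts_sum)
    rw [psi_phi n _ hlt hbnd, Multiset.toFinsupp_toMultiset]
  right_inv b := by
    apply Subtype.ext
    apply Nat.Partition.ext
    show Finsupp.toMultiset (phi n ((Finsupp.toMultiset (psi b.1.parts.toFinsupp)).toFinsupp)) = _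
    rw [Finsupp.toMultiset_toFinsupp]
    have h0 : b.1.parts.toFinsupp 0 = 0 := by
      rw [show b.1.parts.toFinsupp 0 = b.1.parts.count 0 from rfl, Multiset.count_eq_zero]
      intro hmem
      exact absurd (b.1.parts_pos hmem) (by omega)
    have hsq : ∀ k, Nat.sqrt k ^ 2 = k → b.1.parts.toFinsupp k = 0 := fun k hk => by
      by_contra h
      have hmem : k ∈ b.1.parts := by
        rw [← Multiset.count_ne_zero]
        exact h
      have hkpos : 0 < k := b.1.parts_pos hmem
      have hspos : 0 < Nat.sqrt k := by
        rcases Nat.eq_zero_or_pos (Nat.sqrt k) with h' | h'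
        · rw [h'] at hk
          simp at hk
          omega
        · exact h'
      exact b.2 k hmem ⟨Nat.sqrt k, hspos, hk.symm⟩
    have hbnd2 : ∀ k, b.1.parts.toFinsupp k ≠ 0 → k * b.1.parts.toFinsupp k ≤ n := fun k _ => by
      exact le_trans (count_mul_le_sum b.1.parts k) (le_of_eq b.1.parts_sum)
    rw [phi_psi n _ hsq hbnd2, Multiset.toFinsupp_toMultiset]

end Andrews

/-- Andrews' theorem: the number of partitions of `n` in which each part `k` appears
at most `k - 1` times equals the number of partitions of `n` in which no part is a
perfect square. -/
theorem andrews_no_squares (n : ℕ) :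
    Nat.card {p : n.Partition // ∀ k, p.parts.count k ≤ k - 1} =
      Nat.card {p : n.Partition // ∀ i ∈ p.parts, ¬ ∃ m : ℕ, 0 < m ∧ i = m ^ 2} := by
  exact Nat.card_congr (Andrews.equivAB n)
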